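/- Under the bijective correspondence between complete extensions and complete labellings, a complete labelling maximizes the set of in-labelled arguments if and only if the corresponding extension is a preferred extension. -/
import Mathlib


variable {α : Type*}

inductive Label | IN | OUT | UNDEC
deriving DecidableEq

def conflictFree (att : α → α → Prop) (T : Set α) : Prop :=
  ∀ a ∈ T, ∀ b ∈ T, ¬ att a b

def acceptable (att : α → α → Prop) (T : Set α) (a : α) : Prop :=
  ∀ b, att b a → ∃ c ∈ T, att c b

def admissible (att : α → α → Prop) (T : Set α) : Prop :=
  conflictFree att T ∧ ∀ a ∈ T, acceptable att T a

def complete (att : α → α → Prop) (T : Set α) : Prop :=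
  admissible att T ∧ ∀ a, acceptable att T a → a ∈ T

def preferred (att : α → α → Prop) (T : Set α) : Prop :=
  complete att T ∧ ∀ U, complete att U → T ⊆ U → U = T

def completeLab (att : α → α → Prop) (Lab : α → Label) : Prop :=
  (∀ a, Lab a = Label.IN ↔ ∀ b, att b a → Lab b = Label.OUT) ∧
  (∀ a, Lab a = Label.OUT ↔ ∃ b, att b a ∧ Lab b = Label.IN)

lemma completeLab_complete (att : α → α → Prop) (Lab : α → Label)
    (h : completeLab att Lab) : complete att {a | Lab a = Label.IN} := by
  obtain ⟨hin, hout⟩ := h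
  refine ⟨⟨?_, ?_⟩, ?_⟩
  · intro a ha b hb hab
    have : Lab b = Label.OUT := (hout b).2 ⟨a, hab, ha⟩
    simp only [Set.mem_setOf_eq] at hb
    rw [hb] at this; exact Label.noConfusion this
  · intro a ha b hba
    have hbOut : Lab b = Label.OUT := (hin a).1 ha b hba
    obtain ⟨c, hcb, hc⟩ := (hout b).1 hbOut
    exact ⟨c, hc, hcb⟩
  · intro a hacc
    refine (hin a).2 ?_
    intro b hba
    obtain ⟨c, hc, hcb⟩ := hacc b hba
    exact (hout b).2 ⟨c, hcb, hc⟩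

open Classical in
noncomputable def labOf (att : α → α → Prop) (T : Set α) : α → Label :=
  fun a => if a ∈ T then Label.IN else
    if ∃ b ∈ T, att b a then Label.OUT else Label.UNDEC

open Classical in
lemma labOf_in (att : α → α → Prop) (T : Set α) (_hc : conflictFree att T) :
    {a | labOf att T a = Label.IN} = T := by
  ext a
  simp only [Set.mem_setOf_eq, labOf]
  split_ifs with h1 h2
  · simp [h1]
  · simpa using h1
  · simpa using h1

open Classical in
lemma complete_completeLab (att : α → α → Prop) (T : Set α)
    (h : complete att T) : completeLab att (labOf att T) := by
  obtain ⟨⟨hcf, hadm⟩, hcomp⟩ := h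
  constructor
  · intro a
    constructor
    · intro ha b hba
      have haT : a ∈ T := by
        by_contra hne
        simp only [labOf, if_neg hne] at ha
        split_ifs at ha <;> exact Label.noConfusion ha
      obtain ⟨c, hcT, hcb⟩ := hadm a haT b hba
      have hbT : b ∉ T := fun hbT => hcf c hcT b hbT hcb
      have hex : ∃ x ∈ T, att x b := ⟨c, hcT, hcb⟩
      simp [labOf, hbT, hex]
    · intro hb
      have : acceptable att T a := by
        intro b hba
        have := hb b hba
        simp only [labOf] at this
        split_ifs at this with h1 h2
        exact h2
      simp [labOf, hcomp a this]
  · intro a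
    constructor
    · intro ha
      simp only [labOf] at ha
      split_ifs at ha with h1 h2
      obtain ⟨b, hbT, hba⟩ := h2
      exact ⟨b, hba, by simp [labOf, hbT]⟩
    · rintro ⟨b, hba, hb⟩
      have hbT : b ∈ T := by
        by_contra hne
        simp only [labOf, if_neg hne] at hb
        split_ifs at hb <;> exact Label.noConfusion hb
      have haT : a ∉ T := fun haT => hcf b hbT a haT hba
      have hex : ∃ x ∈ T, att x a := ⟨b, hbT, hba⟩
      simp [labOf, haT, hex]

theorem preferredLab_iff_preferred (att : α → α → Prop) (Lab : α → Label)
    (h : completeLab att Lab) :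
    ((∀ Lab' : α → Label, completeLab att Lab' →
        {a | Lab a = Label.IN} ⊆ {a | Lab' a = Label.IN} →
        {a | Lab' a = Label.IN} = {a | Lab a = Label.IN})
      ↔ preferred att {a | Lab a = Label.IN}) := by
  constructor
  · intro hmax
    refine ⟨completeLab_complete att Lab h, ?_⟩
    intro U hU hsub
    have hlab := complete_completeLab att U hU
    have hin := labOf_in att U hU.1.1
    have := hmax (labOf att U) hlab (by rw [hin]; exact hsub)
    rw [hin] at this; exact this
  · rintro ⟨hcomp, hmax⟩ Lab' hLab' hsub
    exact hmax _ (completeLab_complete att Lab' hLab') hsub
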